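/- arXiv:2003.05278 — 2 statements merged into one kernel-verified Lean document; each statement's English description precedes it below -/
import Mathlib

section
/- For positive integers m > n with gcd(m,n) = 1 and m ≢ n (mod 3), the triple (m² + mn + n², n² + 2mn, m² − n²) satisfies gcd of all three entries equal to 1. -/
theorem stmt6 (m n : ℤ) (hn : 0 < n) (hmn : m > n) (hcop : Int.gcd m n = 1)
    (hmod : ¬ m ≡ n [ZMOD 3]) :
    Int.gcd (m ^ 2 + m * n + n ^ 2) (Int.gcd (n ^ 2 + 2 * m * n) (m ^ 2 - n ^ 2)) = 1 := by
  by_contra h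
  obtain ⟨p, hp, hpd⟩ := Nat.exists_prime_and_dvd h
  have hpZ : Prime (p : ℤ) := Int.prime_iff_natAbs_prime.mpr (by simpa using hp)
  have hA : (p : ℤ) ∣ m ^ 2 + m * n + n ^ 2 :=
    dvd_trans (Int.natCast_dvd_natCast.mpr hpd) (Int.gcd_dvd_left _ _)
  have hBC : (p : ℤ) ∣ (Int.gcd (n ^ 2 + 2 * m * n) (m ^ 2 - n ^ 2) : ℤ) :=
    dvd_trans (Int.natCast_dvd_natCast.mpr hpd) (Int.gcd_dvd_right _ _)
  have hB : (p : ℤ) ∣ n ^ 2 + 2 * m * n := dvd_trans hBC (Int.gcd_dvd_left _ _)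
  have hC : (p : ℤ) ∣ m ^ 2 - n ^ 2 := dvd_trans hBC (Int.gcd_dvd_right _ _)
  have hpm : ¬ (p : ℤ) ∣ m := by
    intro hm
    have hn2 : (p : ℤ) ∣ n * n := by
      have : n * n = (m ^ 2 + m * n + n ^ 2) - m * (m + n) := by ring
      rw [this]
      exact dvd_sub hA (Dvd.dvd.mul_right hm _)
    have hdn : (p : ℤ) ∣ n := (hpZ.dvd_mul.mp hn2).elim id id
    have : (p : ℤ) ∣ (Int.gcd m n : ℤ) := Int.dvd_coe_gcd hm hdn
    rw [hcop] at this
    exact hp.one_lt.ne' (Nat.eq_one_of_dvd_one (Int.ofNat_dvd.mp (by simpa using this)))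
  have hpn : ¬ (p : ℤ) ∣ n := by
    intro hdn
    have hm2 : (p : ℤ) ∣ m * m := by
      have : m * m = (m ^ 2 + m * n + n ^ 2) - n * (m + n) := by ring
      rw [this]
      exact dvd_sub hA (Dvd.dvd.mul_right hdn _)
    have hm : (p : ℤ) ∣ m := (hpZ.dvd_mul.mp hm2).elim id id
    exact hpm hm
  have h1 : (p : ℤ) ∣ m - n := by
    have : (p : ℤ) ∣ m * (m - n) := by
      have e : m * (m - n) = (m ^ 2 + m * n + n ^ 2) - (n ^ 2 + 2 * m * n) := by ring
      rw [e]; exact dvd_sub hA hB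
    exact (hpZ.dvd_mul.mp this).elim (fun h => absurd h hpm) id
  have h2 : (p : ℤ) ∣ m + 2 * n := by
    have : (p : ℤ) ∣ n * (m + 2 * n) := by
      have e : n * (m + 2 * n) = (m ^ 2 + m * n + n ^ 2) - (m ^ 2 - n ^ 2) := by ring
      rw [e]; exact dvd_sub hA hC
    exact (hpZ.dvd_mul.mp this).elim (fun h => absurd h hpn) id
  have h3n : (p : ℤ) ∣ 3 * n := by
    have e : (3 : ℤ) * n = (m + 2 * n) - (m - n) := by ring
    rw [e]; exact dvd_sub h2 h1
  have hp3 : (p : ℤ) ∣ 3 := (hpZ.dvd_mul.mp h3n).elim id (fun h => absurd h hpn)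
  have hpeq : (p : ℤ) = 3 := by
    have hd : p ∣ 3 := by exact_mod_cast hp3
    have := (Nat.prime_dvd_prime_iff_eq hp (by norm_num)).mp hd
    exact_mod_cast this
  apply hmod
  have : (3 : ℤ) ∣ m - n := hpeq ▸ h1
  exact Int.modEq_iff_dvd.mpr (dvd_sub_comm.mp this)
end

section
/- Every primitive sub-Eisensteinian triple (a, b, c), up to swapping b and c, is of the form (m² + mn + n², n² + 2mn, m² − n²) for some positive coprime integers m > n with m ≢ n (mod 3), and this representation is unique. -/
private lemma sq_inj' {x y : ℤ} (hx : 0 < x) (hy : 0 < y) (h : x ^ 2 = y ^ 2) : x = y := by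
  have h1 : (x - y) * (x + y) = 0 := by linear_combination h
  rcases mul_eq_zero.mp h1 with h2 | h2 <;> linarith

private lemma gcd_one_of (m n : ℤ)
    (H : ∀ p : ℕ, p.Prime → (p : ℤ) ∣ m → (p : ℤ) ∣ n → False) : Int.gcd m n = 1 := by
  by_contra hne
  obtain ⟨p, pp, pdvd⟩ := Nat.exists_prime_and_dvd hne
  have h1 : (p : ℤ) ∣ (Int.gcd m n : ℤ) := Int.natCast_dvd_natCast.mpr pdvd
  exact H p pp (h1.trans (Int.gcd_dvd_left _ _)) (h1.trans (Int.gcd_dvd_right _ _))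

private lemma dvd_of_dvd_four_mul {p : ℕ} {x y : ℤ} (pp : p.Prime) (hx : Odd x)
    (hpx : (p : ℤ) ∣ x) (h4 : (p : ℤ) ∣ 4 * y) : (p : ℤ) ∣ y := by
  have pp' : Prime (p : ℤ) := Nat.prime_iff_prime_int.mp pp
  have hnp2 : ¬ ((p : ℤ) ∣ 2) := by
    intro hd
    have hd' : p ∣ 2 := by exact_mod_cast hd
    have hp2 : p = 2 := (Nat.prime_dvd_prime_iff_eq pp Nat.prime_two).mp hd'
    rw [hp2] at hpx
    obtain ⟨w, hw⟩ := hpx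
    exact (Int.not_odd_iff_even.mpr ⟨w, by push_cast at hw; linarith⟩) hx
  have h24 : (4 : ℤ) * y = 2 * (2 * y) := by ring
  rw [h24] at h4
  rcases pp'.dvd_mul.mp h4 with h | h
  · exact absurd h hnp2
  · rcases pp'.dvd_mul.mp h with h' | h'
    · exact absurd h' hnp2
    · exact h'

private lemma uniq_aux (a b c m n m' n' : ℤ) (hn : 0 < n) (hmn : n < m)
    (hn' : 0 < n') (hmn' : n' < m')
    (hmod : ¬ m ≡ n [ZMOD 3]) (hmod' : ¬ m' ≡ n' [ZMOD 3])
    (ea : a = m ^ 2 + m * n + n ^ 2) (ea' : a = m' ^ 2 + m' * n' + n' ^ 2)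
    (hbc : (b = n ^ 2 + 2 * m * n ∧ c = m ^ 2 - n ^ 2) ∨
           (b = m ^ 2 - n ^ 2 ∧ c = n ^ 2 + 2 * m * n))
    (hbc' : (b = n' ^ 2 + 2 * m' * n' ∧ c = m' ^ 2 - n' ^ 2) ∨
            (b = m' ^ 2 - n' ^ 2 ∧ c = n' ^ 2 + 2 * m' * n')) :
    m = m' ∧ n = n' := by
  rcases hbc with ⟨eb, ec⟩ | ⟨eb, ec⟩ <;> rcases hbc' with ⟨eb', ec'⟩ | ⟨eb', ec'⟩
  · -- both first case
    have e1 : (m - n) ^ 2 = (m' - n') ^ 2 := by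
      linear_combination (2*ea' - 2*eb' - ec') - (2*ea - 2*eb - ec)
    have h1 : m - n = m' - n' := sq_inj' (by linarith) (by linarith) e1
    have e2 : 3 * (m + n) ^ 2 = 3 * (m' + n') ^ 2 := by
      linear_combination (2*ea' + 2*eb' + ec') - (2*ea + 2*eb + ec)
    have h2 : m + n = m' + n' :=
      sq_inj' (by linarith) (by linarith) (by linarith)
    constructor <;> linarith
  · -- mixed : contradiction
    exfalso
    have e1 : (m - n) ^ 2 = 3 * n' ^ 2 := by
      linear_combination (2*ea' - 2*eb' - ec') - (2*ea - 2*eb - ec)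
    have h3 : (3 : ℤ) ∣ (m - n) * (m - n) := ⟨n' ^ 2, by linear_combination e1⟩
    have hd : (3 : ℤ) ∣ m - n := (Int.prime_three.dvd_mul.mp h3).elim id id
    have : (3 : ℤ) ∣ n - m := by omega
    exact hmod (Int.modEq_iff_dvd.mpr this)
  · -- mixed other way
    exfalso
    have e1 : (m' - n') ^ 2 = 3 * n ^ 2 := by
      linear_combination (2*ea - 2*eb - ec) - (2*ea' - 2*eb' - ec')
    have h3 : (3 : ℤ) ∣ (m' - n') * (m' - n') := ⟨n ^ 2, by linear_combination e1⟩
    have hd : (3 : ℤ) ∣ m' - n' := (Int.prime_three.dvd_mul.mp h3).elim id id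
    have : (3 : ℤ) ∣ n' - m' := by omega
    exact hmod' (Int.modEq_iff_dvd.mpr this)
  · -- both second case
    have e1 : 3 * n ^ 2 = 3 * n' ^ 2 := by
      linear_combination (2*ea' - 2*eb' - ec') - (2*ea - 2*eb - ec)
    have h1 : n = n' := sq_inj' hn hn' (by linarith)
    have e2 : (2 * m + n) ^ 2 = (2 * m' + n') ^ 2 := by
      linear_combination (2*ea' + 2*eb' + ec') - (2*ea + 2*eb + ec)
    have h2 : 2 * m + n = 2 * m' + n' :=
      sq_inj' (by linarith) (by linarith) e2
    constructor <;> linarith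

set_option maxHeartbeats 1000000 in
private lemma exist_odd (a b c : ℤ) (ha : 0 < a) (hb : 0 < b) (hc : 0 < c)
    (h : a ^ 2 = b ^ 2 + c ^ 2 + b * c)
    (key : ∀ d : ℤ, d ∣ a → d ∣ b → d ∣ c → d ∣ 1)
    (h3a : ¬ (3 : ℤ) ∣ a) (hodd : Odd c) :
    ∃ mn : ℤ × ℤ, 0 < mn.2 ∧ mn.1 > mn.2 ∧ Int.gcd mn.1 mn.2 = 1 ∧
      ¬ mn.1 ≡ mn.2 [ZMOD 3] ∧
      a = mn.1 ^ 2 + mn.1 * mn.2 + mn.2 ^ 2 ∧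
      ((b = mn.2 ^ 2 + 2 * mn.1 * mn.2 ∧ c = mn.1 ^ 2 - mn.2 ^ 2) ∨
       (b = mn.1 ^ 2 - mn.2 ^ 2 ∧ c = mn.2 ^ 2 + 2 * mn.1 * mn.2)) := by
  set u : ℤ := 2 * a - 2 * b - c with hu_def
  set v : ℤ := 2 * a + 2 * b + c with hv_def
  have hu : 0 < u := by
    rw [hu_def]
    by_contra hge
    push_neg at hge
    nlinarith [mul_nonneg (sub_nonneg.mpr hge) (show (0:ℤ) ≤ 2*a + 2*b + c by linarith)]
  have hv : 0 < v := by rw [hv_def]; linarith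
  have huv : u * v = 3 * c ^ 2 := by rw [hu_def, hv_def]; linear_combination 4 * h
  have hou : Odd u := by
    obtain ⟨k, hk⟩ := hodd
    exact ⟨a - b - k - 1, by rw [hu_def, hk]; ring⟩
  have hov : Odd v := by
    obtain ⟨k, hk⟩ := hodd
    exact ⟨a + b + k, by rw [hv_def, hk]; ring⟩
  have hv3u : 3 * u < v := by
    have h2bc : a < 2 * b + c := by
      by_contra hge
      push_neg at hge
      nlinarith [mul_nonneg (sub_nonneg.mpr hge) (show (0:ℤ) ≤ a + 2*b + c by linarith)]
    rw [hu_def, hv_def]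
    linarith
  have hbbc : b * (b + c) = a ^ 2 - c ^ 2 := by linear_combination -h
  have h4a : (4 : ℤ) * a = u + v := by rw [hu_def, hv_def]; ring
  have h4b : (4 : ℤ) * b = v - u - 2 * c := by rw [hu_def, hv_def]; ring
  have hgcduv : Int.gcd u v = 1 := by
    apply gcd_one_of
    intro p pp hpu hpv
    have pp' : Prime (p : ℤ) := Nat.prime_iff_prime_int.mp pp
    have hpa : (p : ℤ) ∣ a := by
      apply dvd_of_dvd_four_mul pp hou hpu
      rw [h4a]; exact dvd_add hpu hpv
    have hpc : (p : ℤ) ∣ c := by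
      have hp3c : (p : ℤ) ∣ 3 * c ^ 2 := huv ▸ hpu.mul_right v
      rcases pp'.dvd_mul.mp hp3c with h3 | hc2
      · exfalso
        have hd' : p ∣ 3 := by exact_mod_cast h3
        have hp3 : p = 3 := (Nat.prime_dvd_prime_iff_eq pp Nat.prime_three).mp hd'
        rw [hp3] at hpa
        exact h3a (by exact_mod_cast hpa)
      · exact pp'.dvd_of_dvd_pow hc2
    have hpb : (p : ℤ) ∣ b := by
      apply dvd_of_dvd_four_mul pp hou hpu
      rw [h4b]
      exact dvd_sub (dvd_sub hpv hpu) (hpc.mul_left 2)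
    exact pp'.not_isUnit (isUnit_of_dvd_one (key _ hpa hpb hpc))
  have hcop : IsCoprime u v := Int.isCoprime_iff_gcd_eq_one.mpr hgcduv
  have h3uv : (3 : ℤ) ∣ u * v := ⟨c ^ 2, huv⟩
  have getsq : ∀ x : ℤ, 0 < x → (∃ x0 : ℤ, x = x0 ^ 2 ∨ x = -x0 ^ 2) →
      ∃ s : ℤ, 0 < s ∧ x = s ^ 2 := by
    rintro x hx ⟨x0, hx0 | hx0⟩
    · refine ⟨|x0|, abs_pos.mpr ?_, by rw [sq_abs]; exact hx0⟩
      rintro rfl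
      simp at hx0
      omega
    · exfalso; nlinarith [sq_nonneg x0]
  rcases Int.prime_three.dvd_mul.mp h3uv with h3u | h3v
  · -- case 3 ∣ u : second disjunct
    obtain ⟨w, hw⟩ := h3u
    have hwpos : 0 < w := by linarith
    have hcopwv : IsCoprime w v := hcop.of_isCoprime_of_dvd_left ⟨3, by rw [hw]; ring⟩
    have heqw : w * v = c ^ 2 := by
      have h3' : (3 : ℤ) * (w * v) = 3 * c ^ 2 := by rw [hw] at huv; linear_combination huv
      exact mul_left_cancel₀ (by norm_num) h3'
    obtain ⟨s, hspos, hs⟩ := getsq w hwpos (Int.sq_of_isCoprime hcopwv heqw)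
    obtain ⟨t, htpos, ht⟩ := getsq v hv
      (Int.sq_of_isCoprime hcopwv.symm (show v * w = c ^ 2 by linear_combination heqw))
    have hct : c = s * t := by
      apply sq_inj' hc (mul_pos hspos htpos)
      rw [hs, ht] at heqw
      linear_combination - heqw
    have hos : Odd s := by
      rcases Int.even_or_odd s with ⟨k, hk⟩ | hodd'
      · exact absurd hou (Int.not_odd_iff_even.mpr (⟨6 * k * k, by rw [hw, hs, hk]; ring⟩ : Even u))
      · exact hodd'
    have hot : Odd t := by
      rcases Int.even_or_odd t with ⟨k, hk⟩ | hodd'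
      · exact absurd hov (Int.not_odd_iff_even.mpr (⟨2 * k * k, by rw [ht, hk]; ring⟩ : Even v))
      · exact hodd'
    have hsq1 : (3 * s) ^ 2 < t ^ 2 := by nlinarith [hw, hs, ht, hv3u]
    have ht3s : 3 * s < t := by nlinarith [hsq1, hspos, htpos]
    obtain ⟨m, hm⟩ : ∃ m : ℤ, t - s = 2 * m := by
      obtain ⟨k, hk⟩ := hot; obtain ⟨l, hl⟩ := hos
      exact ⟨k - l, by omega⟩
    refine ⟨(m, s), hspos, show m > s by omega, ?_, ?_, ?_, Or.inr ⟨?_, ?_⟩⟩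
    · apply gcd_one_of
      intro p pp hpm hps
      have pp' : Prime (p : ℤ) := Nat.prime_iff_prime_int.mp pp
      have hpt : (p : ℤ) ∣ t := by
        have htt : t = 2 * m + s := by omega
        rw [htt]; exact dvd_add (hpm.mul_left 2) hps
      have hpc : (p : ℤ) ∣ c := by rw [hct]; exact hps.mul_right t
      have hpa : (p : ℤ) ∣ a := by
        apply dvd_of_dvd_four_mul pp hodd hpc
        have e : (4 : ℤ) * a = 3 * s ^ 2 + t ^ 2 := by rw [h4a, hw, hs, ht] <;> ring
        rw [e]
        exact dvd_add ((dvd_pow hps (by norm_num)).mul_left 3)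
          (dvd_pow hpt (by norm_num))
      have hpb : (p : ℤ) ∣ b := by
        have hbc2 : (p : ℤ) ∣ b * (b + c) := by
          rw [hbbc]
          exact dvd_sub (dvd_pow hpa (by norm_num)) (dvd_pow hpc (by norm_num))
        rcases pp'.dvd_mul.mp hbc2 with hh | hh
        · exact hh
        · have h5 := dvd_sub hh hpc
          simpa using h5
      exact pp'.not_isUnit (isUnit_of_dvd_one (key _ hpa hpb hpc))
    · show ¬ m ≡ s [ZMOD 3]
      intro hmod
      rw [Int.modEq_iff_dvd] at hmod
      have h3t : (3 : ℤ) ∣ t := by omega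
      have h3v' : (3 : ℤ) ∣ v := by rw [ht]; exact dvd_pow h3t (by norm_num)
      exact Int.prime_three.not_isUnit (hcop.isUnit_of_dvd' ⟨w, hw⟩ h3v')
    · show a = m ^ 2 + m * s + s ^ 2
      have e1 : 4 * a = 3 * s ^ 2 + t ^ 2 := by rw [h4a, hw, hs, ht] <;> ring
      have ht' : t = 2 * m + s := by omega
      rw [ht'] at e1
      have e2 : 4 * a = 4 * (m ^ 2 + m * s + s ^ 2) := by linear_combination e1
      linarith
    · show b = m ^ 2 - s ^ 2
      have e1 : 4 * b = t ^ 2 - 3 * s ^ 2 - 2 * (s * t) := by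
        rw [h4b, hw, hs, ht, hct] <;> ring
      have ht' : t = 2 * m + s := by omega
      rw [ht'] at e1
      have e2 : 4 * b = 4 * (m ^ 2 - s ^ 2) := by linear_combination e1
      linarith
    · show c = s ^ 2 + 2 * m * s
      have ht' : t = 2 * m + s := by omega
      rw [hct, ht']; ring
  · -- case 3 ∣ v : first disjunct
    obtain ⟨w, hw⟩ := h3v
    have hwpos : 0 < w := by linarith
    have hcopuw : IsCoprime u w := hcop.of_isCoprime_of_dvd_right ⟨3, by rw [hw]; ring⟩
    have hequw : u * w = c ^ 2 := by
      have h3' : (3 : ℤ) * (u * w) = 3 * c ^ 2 := by rw [hw] at huv; linear_combination huv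
      exact mul_left_cancel₀ (by norm_num) h3'
    obtain ⟨s, hspos, hs⟩ := getsq u hu (Int.sq_of_isCoprime hcopuw hequw)
    obtain ⟨t, htpos, ht⟩ := getsq w hwpos
      (Int.sq_of_isCoprime hcopuw.symm (show w * u = c ^ 2 by linear_combination hequw))
    have hct : c = s * t := by
      apply sq_inj' hc (mul_pos hspos htpos)
      rw [hs, ht] at hequw
      linear_combination - hequw
    have hos : Odd s := by
      rcases Int.even_or_odd s with ⟨k, hk⟩ | hodd'
      · exact absurd hou (Int.not_odd_iff_even.mpr (⟨2 * k * k, by rw [hs, hk]; ring⟩ : Even u))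
      · exact hodd'
    have hot : Odd t := by
      rcases Int.even_or_odd t with ⟨k, hk⟩ | hodd'
      · exact absurd hov (Int.not_odd_iff_even.mpr (⟨6 * k * k, by rw [hw, ht, hk]; ring⟩ : Even v))
      · exact hodd'
    have hsq1 : s ^ 2 < t ^ 2 := by nlinarith [hw, hs, ht, hv3u]
    have hts : s < t := by nlinarith [hsq1, hspos, htpos]
    obtain ⟨n, hn⟩ : ∃ n : ℤ, t - s = 2 * n := by
      obtain ⟨k, hk⟩ := hot; obtain ⟨l, hl⟩ := hos
      exact ⟨k - l, by omega⟩
    refine ⟨(s + n, n), show (0:ℤ) < n by omega, show s + n > n by omega, ?_, ?_, ?_,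
      Or.inl ⟨?_, ?_⟩⟩
    · apply gcd_one_of
      intro p pp hpm hpn
      have pp' : Prime (p : ℤ) := Nat.prime_iff_prime_int.mp pp
      have hps : (p : ℤ) ∣ s := by
        have hss : s = (s + n) - n := by ring
        rw [hss]; exact dvd_sub hpm hpn
      have hpt : (p : ℤ) ∣ t := by
        have htt : t = (s + n) + n := by omega
        rw [htt]; exact dvd_add hpm hpn
      have hpc : (p : ℤ) ∣ c := by rw [hct]; exact hps.mul_right t
      have hpa : (p : ℤ) ∣ a := by
        apply dvd_of_dvd_four_mul pp hodd hpc
        have e : (4 : ℤ) * a = s ^ 2 + 3 * t ^ 2 := by rw [h4a, hw, hs, ht] <;> ring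
        rw [e]
        exact dvd_add (dvd_pow hps (by norm_num))
          ((dvd_pow hpt (by norm_num)).mul_left 3)
      have hpb : (p : ℤ) ∣ b := by
        have hbc2 : (p : ℤ) ∣ b * (b + c) := by
          rw [hbbc]
          exact dvd_sub (dvd_pow hpa (by norm_num)) (dvd_pow hpc (by norm_num))
        rcases pp'.dvd_mul.mp hbc2 with hh | hh
        · exact hh
        · have h5 := dvd_sub hh hpc
          simpa using h5
      exact pp'.not_isUnit (isUnit_of_dvd_one (key _ hpa hpb hpc))
    · show ¬ (s + n) ≡ n [ZMOD 3]
      intro hmod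
      rw [Int.modEq_iff_dvd] at hmod
      have h3s : (3 : ℤ) ∣ s := by omega
      have h3u' : (3 : ℤ) ∣ u := by rw [hs]; exact dvd_pow h3s (by norm_num)
      exact Int.prime_three.not_isUnit (hcop.isUnit_of_dvd' h3u' ⟨w, hw⟩)
    · show a = (s + n) ^ 2 + (s + n) * n + n ^ 2
      have e1 : 4 * a = s ^ 2 + 3 * t ^ 2 := by rw [h4a, hw, hs, ht] <;> ring
      have ht' : t = s + 2 * n := by omega
      rw [ht'] at e1
      have e2 : 4 * a = 4 * ((s + n) ^ 2 + (s + n) * n + n ^ 2) := by linear_combination e1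
      linarith
    · show b = n ^ 2 + 2 * (s + n) * n
      have e1 : 4 * b = 3 * t ^ 2 - s ^ 2 - 2 * (s * t) := by
        rw [h4b, hw, hs, ht, hct] <;> ring
      have ht' : t = s + 2 * n := by omega
      rw [ht'] at e1
      have e2 : 4 * b = 4 * (n ^ 2 + 2 * (s + n) * n) := by linear_combination e1
      linarith
    · show c = (s + n) ^ 2 - n ^ 2
      have ht' : t = s + 2 * n := by omega
      rw [hct, ht']; ring

set_option maxHeartbeats 1000000 in
theorem stmt7 (a b c : ℤ) (ha : 0 < a) (hb : 0 < b) (hc : 0 < c)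
    (h : a ^ 2 = b ^ 2 + c ^ 2 + b * c)
    (hgcd : Int.gcd a (Int.gcd b c) = 1) :
    ∃! mn : ℤ × ℤ, 0 < mn.2 ∧ mn.1 > mn.2 ∧ Int.gcd mn.1 mn.2 = 1 ∧
      ¬ mn.1 ≡ mn.2 [ZMOD 3] ∧
      a = mn.1 ^ 2 + mn.1 * mn.2 + mn.2 ^ 2 ∧
      ((b = mn.2 ^ 2 + 2 * mn.1 * mn.2 ∧ c = mn.1 ^ 2 - mn.2 ^ 2) ∨
       (b = mn.1 ^ 2 - mn.2 ^ 2 ∧ c = mn.2 ^ 2 + 2 * mn.1 * mn.2)) := by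
  have key : ∀ d : ℤ, d ∣ a → d ∣ b → d ∣ c → d ∣ 1 := by
    intro d da db dc
    have h1 : d ∣ (Int.gcd b c : ℤ) := Int.dvd_coe_gcd db dc
    have h2 : d ∣ (Int.gcd a (Int.gcd b c) : ℤ) := Int.dvd_coe_gcd da h1
    rw [hgcd] at h2
    exact_mod_cast h2
  have h3a : ¬ (3 : ℤ) ∣ a := by
    intro h3
    obtain ⟨k, hk⟩ := h3
    have h3a2 : (3 : ℤ) ∣ (b - c) * (b - c) :=
      ⟨3 * k ^ 2 - b * c, by linear_combination -h + (a + 3 * k) * hk⟩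
    have h3bc : (3 : ℤ) ∣ b - c := (Int.prime_three.dvd_mul.mp h3a2).elim id id
    obtain ⟨l, hl⟩ := h3bc
    have e : (3 : ℤ) * (c * c) = 3 * (3 * (k ^ 2 - l * c - l ^ 2)) := by
      linear_combination -h + (a + 3 * k) * hk - (b + 2 * c + 3 * l) * hl
    have hc2 : (3 : ℤ) ∣ c * c :=
      ⟨k ^ 2 - l * c - l ^ 2, mul_left_cancel₀ (show (3:ℤ) ≠ 0 by norm_num) e⟩
    have hc3 : (3 : ℤ) ∣ c := (Int.prime_three.dvd_mul.mp hc2).elim id id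
    obtain ⟨j, hj⟩ := hc3
    have hb3 : (3 : ℤ) ∣ b := ⟨j + l, by omega⟩
    have := key 3 ⟨k, hk⟩ hb3 ⟨j, hj⟩
    norm_num at this
  have hmain : ∃ mn : ℤ × ℤ, 0 < mn.2 ∧ mn.1 > mn.2 ∧ Int.gcd mn.1 mn.2 = 1 ∧
      ¬ mn.1 ≡ mn.2 [ZMOD 3] ∧
      a = mn.1 ^ 2 + mn.1 * mn.2 + mn.2 ^ 2 ∧
      ((b = mn.2 ^ 2 + 2 * mn.1 * mn.2 ∧ c = mn.1 ^ 2 - mn.2 ^ 2) ∨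
       (b = mn.1 ^ 2 - mn.2 ^ 2 ∧ c = mn.2 ^ 2 + 2 * mn.1 * mn.2)) := by
    rcases Int.even_or_odd c with hce | hco
    · -- c even, so b odd; apply the lemma with b and c swapped
      have hbo : Odd b := by
        by_contra hno
        have hbe : Even b := Int.not_odd_iff_even.mp hno
        obtain ⟨k, hk⟩ := hbe
        obtain ⟨l, hl⟩ := hce
        have h2a2 : (2 : ℤ) ∣ a * a := ⟨2 * k * k + 2 * l * l + 2 * k * l,
          by linear_combination h + (b + 2 * k) * hk + (c + 2 * l) * hl + b * hl + 2 * l * hk⟩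
        have h2a : (2 : ℤ) ∣ a := (Int.prime_two.dvd_mul.mp h2a2).elim id id
        have := key 2 h2a ⟨k, by omega⟩ ⟨l, by omega⟩
        norm_num at this
      have h' : a ^ 2 = c ^ 2 + b ^ 2 + c * b := by linear_combination h
      have key' : ∀ d : ℤ, d ∣ a → d ∣ c → d ∣ b → d ∣ 1 := fun d da dc db => key d da db dc
      obtain ⟨⟨m, n⟩, p1, p2, p3, p4, p5, p6⟩ := exist_odd a c b ha hc hb h' key' h3a hbo
      refine ⟨(m, n), p1, p2, p3, p4, p5, ?_⟩
      rcases p6 with ⟨x, y⟩ | ⟨x, y⟩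
      · exact Or.inr ⟨y, x⟩
      · exact Or.inl ⟨y, x⟩
    · exact exist_odd a b c ha hb hc h key h3a hco
  obtain ⟨⟨m, n⟩, hP⟩ := hmain
  refine ⟨(m, n), hP, ?_⟩
  rintro ⟨m', n'⟩ ⟨h1, h2, h3, h4, h5, h6⟩
  obtain ⟨g1, g2, g3, g4, g5, g6⟩ := hP
  have hres := uniq_aux a b c m' n' m n h1 h2 g1 g2 h4 g4 h5 g5 h6 g6
  rw [Prod.mk.injEq]
  exact hres
end
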